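/- (Volume scaling of the perturbed regions) Let ψ = (ψ_p)_{p∈S} be a collection of approximating functions, ε ∈ (0,1), and T = (T_p) ∈ ℝ_{≥1} × ∏_{p∈S_f}{p^k : k ∈ ℕ}. Then vol(E_{ψ⁺_ε}(T⁺)) = (1+ε)^2 · vol(E_ψ(T)) and vol(E_{ψ⁻_ε}(T⁻)) = (1+ε)^{−2} · vol(E_ψ(T)). -/

import Mathlib

open MeasureTheory Matrix

noncomputable section

/-- `z` belongs to the ring of `S`-integers `ℤ_S = ℤ[1/P]`,
where `P` is the product of the finite primes in `S`. -/
def IsZS (P : ℕ) (z : ℚ) : Prop := ∃ (a : ℤ) (k : ℕ), z = (a : ℚ) / (P : ℚ) ^ k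

/-- A collection of approximating functions `ψ = (ψ_p)_{p ∈ S}`:
each `ψ_p : ℝ_{>0} → ℝ_{>0}` is non-increasing and `≡ 1` on `(0,1]`
(we extend by `1` on `t ≤ 1`); moreover for each finite place `p`,
`ψ_p` is constant on `{p^{kn}, …, p^{kn+n-1}}` for every `k ∈ ℤ` and
takes values in `p^{mℤ}` on `p^ℤ`. -/
structure ApproxFamily (m n s : ℕ) (p : Fin s → ℕ) : Type where
  psiR : ℝ → ℝ
  psiP : Fin s → ℝ → ℝ
  posR : ∀ t, 0 < psiR t
  antiR : ∀ ⦃t₁ t₂ : ℝ⦄, 0 < t₁ → t₁ ≤ t₂ → psiR t₂ ≤ psiR t₁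
  oneR : ∀ ⦃t : ℝ⦄, t ≤ 1 → psiR t = 1
  posP : ∀ i t, 0 < psiP i t
  antiP : ∀ i ⦃t₁ t₂ : ℝ⦄, 0 < t₁ → t₁ ≤ t₂ → psiP i t₂ ≤ psiP i t₁
  oneP : ∀ i ⦃t : ℝ⦄, t ≤ 1 → psiP i t = 1
  constP : ∀ i (k : ℤ) (j : ℕ), j < n →
    psiP i ((p i : ℝ) ^ (k * n + j : ℤ)) = psiP i ((p i : ℝ) ^ (k * n : ℤ))
  valsP : ∀ i (k : ℤ), ∃ l : ℤ, psiP i ((p i : ℝ) ^ k) = (p i : ℝ) ^ (m * l : ℤ)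

/-- The real components of the diagonal embedding of a rational vector. -/
def ratR {k : ℕ} (q : Fin k → ℚ) : Fin k → ℝ := fun j => (q j : ℝ)

/-- The `p i`-adic components of the diagonal embedding of a rational vector. -/
def ratP {s : ℕ} (p : Fin s → ℕ) [∀ i, Fact (p i).Prime] {k : ℕ} (i : Fin s)
    (q : Fin k → ℚ) : Fin k → ℚ_[p i] := fun j => (q j : ℚ_[p i])

/-- The region `E_f(T) ⊆ ℚ_S^m × ℚ_S^n` cut out by `‖x‖_p^m ≤ f_p(‖y‖_p^n)` and
`‖y‖_p^n ≤ T_p` for all `p ∈ S` (product coordinates). -/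
def Eprod (m n : ℕ) {s : ℕ} (p : Fin s → ℕ) [∀ i, Fact (p i).Prime]
    (fR : ℝ → ℝ) (fP : Fin s → ℝ → ℝ) (TR : ℝ) (TP : Fin s → ℝ) :
    Set (((Fin m → ℝ) × ∀ i, Fin m → ℚ_[p i]) × ((Fin n → ℝ) × ∀ i, Fin n → ℚ_[p i])) :=
  {xy | ‖xy.1.1‖ ^ m ≤ fR (‖xy.2.1‖ ^ n) ∧ ‖xy.2.1‖ ^ n ≤ TR ∧
      ∀ i, ‖xy.1.2 i‖ ^ m ≤ fP i (‖xy.2.2 i‖ ^ n) ∧ ‖xy.2.2 i‖ ^ n ≤ TP i}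

/-- The region `E_f(T) ⊆ ℚ_S^{m+n}`, where the first `m` coordinates play the role of
`x` and the last `n` coordinates the role of `y`. -/
def Efull (m n : ℕ) {s : ℕ} (p : Fin s → ℕ) [∀ i, Fact (p i).Prime]
    (fR : ℝ → ℝ) (fP : Fin s → ℝ → ℝ) (TR : ℝ) (TP : Fin s → ℝ) :
    Set ((Fin (m + n) → ℝ) × ∀ i, Fin (m + n) → ℚ_[p i]) :=
  {v | ‖fun a : Fin m => v.1 (Fin.castAdd n a)‖ ^ m
        ≤ fR (‖fun b : Fin n => v.1 (Fin.natAdd m b)‖ ^ n) ∧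
      ‖fun b : Fin n => v.1 (Fin.natAdd m b)‖ ^ n ≤ TR ∧
      ∀ i, ‖fun a : Fin m => v.2 i (Fin.castAdd n a)‖ ^ m
            ≤ fP i (‖fun b : Fin n => v.2 i (Fin.natAdd m b)‖ ^ n) ∧
          ‖fun b : Fin n => v.2 i (Fin.natAdd m b)‖ ^ n ≤ TP i}

/-- The operator norm of a real matrix acting on sup-normed spaces. -/
def opNorm {k l : ℕ} (M : Matrix (Fin k) (Fin l) ℝ) : ℝ :=
  ‖LinearMap.toContinuousLinearMap M.mulVecLin‖

/-- An element of the group `𝐇 = ∏_{p ∈ S} H_p` of block lower-triangular matrices,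
given by its blocks at each place. -/
structure HElem (m n : ℕ) (s : ℕ) (p : Fin s → ℕ) [∀ i, Fact (p i).Prime] : Type where
  aR : Matrix (Fin m) (Fin m) ℝ
  bR : Matrix (Fin n) (Fin m) ℝ
  cR : Matrix (Fin n) (Fin n) ℝ
  aP : ∀ i, Matrix (Fin m) (Fin m) ℚ_[p i]
  bP : ∀ i, Matrix (Fin n) (Fin m) ℚ_[p i]
  cP : ∀ i, Matrix (Fin n) (Fin n) ℚ_[p i]

/-- The action of an element of `𝐇` on `ℚ_S^m × ℚ_S^n`:
`h·(x, y) = (α x, β x + γ y)` at each place. -/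
def HElem.act {m n s : ℕ} {p : Fin s → ℕ} [∀ i, Fact (p i).Prime] (h : HElem m n s p)
    (xy : ((Fin m → ℝ) × ∀ i, Fin m → ℚ_[p i]) × ((Fin n → ℝ) × ∀ i, Fin n → ℚ_[p i])) :
    ((Fin m → ℝ) × ∀ i, Fin m → ℚ_[p i]) × ((Fin n → ℝ) × ∀ i, Fin n → ℚ_[p i]) :=
  ((h.aR.mulVec xy.1.1, fun i => (h.aP i).mulVec (xy.1.2 i)),
   (h.bR.mulVec xy.1.1 + h.cR.mulVec xy.2.1,
    fun i => (h.bP i).mulVec (xy.1.2 i) + (h.cP i).mulVec (xy.2.2 i)))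

/-- Membership in `H̃_{∞,ε}`: operator norm bounds on the blocks. -/
def inHtilde (m n : ℕ) (ε : ℝ) (α : Matrix (Fin m) (Fin m) ℝ) (β : Matrix (Fin n) (Fin m) ℝ)
    (γ : Matrix (Fin n) (Fin n) ℝ) : Prop :=
  opNorm α ^ m ≤ 1 + ε ∧ opNorm γ ^ n ≤ 1 + ε / 2 ∧ opNorm β ≤ ε / (4 * n)

/-- `h ∈ (H̃_{∞,ε} ∩ H̃_{∞,ε}⁻¹) × ∏_{p ∈ S_f} H_p(ℤ_p)`. -/
def HElem.isAdmissible {m n s : ℕ} {p : Fin s → ℕ} [∀ i, Fact (p i).Prime]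
    (h : HElem m n s p) (ε : ℝ) : Prop :=
  IsUnit h.aR.det ∧ IsUnit h.cR.det ∧
  inHtilde m n ε h.aR h.bR h.cR ∧
  inHtilde m n ε h.aR⁻¹ (-(h.cR⁻¹ * h.bR * h.aR⁻¹)) h.cR⁻¹ ∧
  ∀ i, ((∀ a b, ‖h.aP i a b‖ ≤ 1) ∧ ‖(h.aP i).det‖ = 1) ∧
      ((∀ a b, ‖h.cP i a b‖ ≤ 1) ∧ ‖(h.cP i).det‖ = 1) ∧
      (∀ a b, ‖h.bP i a b‖ ≤ 1)

end

open MeasureTheory in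
private lemma aux_sigmaFinite_smul {α : Type*} [MeasurableSpace α] (c : ENNReal) (hc : c ≠ ⊤)
    (μ : Measure α) [SigmaFinite μ] : SigmaFinite (c • μ) := by
  lift c to NNReal using hc
  rw [← ENNReal.smul_def]
  infer_instance

open MeasureTheory in
private lemma aux_smul_prod {α β : Type*} [MeasurableSpace α] [MeasurableSpace β]
    (c : ENNReal) (hc : c ≠ ⊤) (μ : Measure α) (ν : Measure β)
    [SigmaFinite μ] [SigmaFinite ν] :
    (c • μ).prod ν = c • μ.prod ν := by
  haveI := aux_sigmaFinite_smul c hc μ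
  refine Measure.prod_eq fun s t hs ht => ?_
  simp [Measure.prod_prod, mul_assoc]

open MeasureTheory in
private lemma aux_prod_smul {α β : Type*} [MeasurableSpace α] [MeasurableSpace β]
    (c : ENNReal) (hc : c ≠ ⊤) (μ : Measure α) (ν : Measure β)
    [SigmaFinite μ] [SigmaFinite ν] :
    μ.prod (c • ν) = c • μ.prod ν := by
  haveI := aux_sigmaFinite_smul c hc ν
  refine Measure.prod_eq fun s t hs ht => ?_
  simp only [Measure.prod_prod, Measure.smul_apply, smul_eq_mul]
  ring

open MeasureTheory in
private lemma aux_scale (m n : ℕ) (hm : 0 < m) (hn : 0 < n)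
    (s : ℕ) (p : Fin s → ℕ) [∀ i, Fact (p i).Prime]
    [∀ i, MeasurableSpace ℚ_[p i]] [∀ i, BorelSpace ℚ_[p i]]
    (μm : ∀ i, Measure (Fin m → ℚ_[p i])) [∀ i, (μm i).IsAddHaarMeasure]
    (μn : ∀ i, Measure (Fin n → ℚ_[p i])) [∀ i, (μn i).IsAddHaarMeasure]
    (fR : ℝ → ℝ) (fP : Fin s → ℝ → ℝ) (TR : ℝ) (TP : Fin s → ℝ)
    (r : ℝ) (hr : 0 < r) :
    (((volume : Measure (Fin m → ℝ)).prod (Measure.pi μm)).prod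
        ((volume : Measure (Fin n → ℝ)).prod (Measure.pi μn)))
        (Eprod m n p (fun t => r * fR (r⁻¹ * t)) fP (r * TR) TP)
      = ENNReal.ofReal (r ^ 2)
        * (((volume : Measure (Fin m → ℝ)).prod (Measure.pi μm)).prod
            ((volume : Measure (Fin n → ℝ)).prod (Measure.pi μn)))
            (Eprod m n p fR fP TR TP) := by
  set c : ℝ := r ^ ((m : ℝ)⁻¹) with hc_def
  set d : ℝ := r ^ ((n : ℝ)⁻¹) with hd_def
  have hc : 0 < c := Real.rpow_pos_of_pos hr _
  have hd : 0 < d := Real.rpow_pos_of_pos hr _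
  have hcm : c ^ m = r := by
    rw [hc_def, ← Real.rpow_natCast (r ^ ((m : ℝ)⁻¹)) m, ← Real.rpow_mul hr.le,
      inv_mul_cancel₀ (by exact_mod_cast hm.ne'), Real.rpow_one]
  have hdn : d ^ n = r := by
    rw [hd_def, ← Real.rpow_natCast (r ^ ((n : ℝ)⁻¹)) n, ← Real.rpow_mul hr.le,
      inv_mul_cancel₀ (by exact_mod_cast hn.ne'), Real.rpow_one]
  set Φx : (Fin m → ℝ) ≃ᵐ (Fin m → ℝ) := MeasurableEquiv.smul₀ c⁻¹ (inv_ne_zero hc.ne')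
  set Φy : (Fin n → ℝ) ≃ᵐ (Fin n → ℝ) := MeasurableEquiv.smul₀ d⁻¹ (inv_ne_zero hd.ne')
  set Φ := (Φx.prodCongr (MeasurableEquiv.refl (∀ i, Fin m → ℚ_[p i]))).prodCongr
      (Φy.prodCongr (MeasurableEquiv.refl (∀ i, Fin n → ℚ_[p i])))
  have hΦapp : ∀ xy, Φ xy = ((c⁻¹ • xy.1.1, xy.1.2), (d⁻¹ • xy.2.1, xy.2.2)) :=
    fun _ => rfl
  have hset : Eprod m n p (fun t => r * fR (r⁻¹ * t)) fP (r * TR) TP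
      = Φ ⁻¹' Eprod m n p fR fP TR TP := by
    ext xy
    have hnx : ‖c⁻¹ • xy.1.1‖ ^ m = r⁻¹ * ‖xy.1.1‖ ^ m := by
      rw [norm_smul, Real.norm_eq_abs, abs_inv, abs_of_pos hc, mul_pow, inv_pow, hcm]
    have hny : ‖d⁻¹ • xy.2.1‖ ^ n = r⁻¹ * ‖xy.2.1‖ ^ n := by
      rw [norm_smul, Real.norm_eq_abs, abs_inv, abs_of_pos hd, mul_pow, inv_pow, hdn]
    simp only [Eprod, Set.mem_setOf_eq, Set.mem_preimage, hΦapp, hnx, hny]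
    rw [inv_mul_le_iff₀ hr, inv_mul_le_iff₀ hr]
  rw [hset, ← MeasurableEquiv.map_apply Φ]
  have hΦcoe : ⇑Φ = Prod.map (Prod.map (fun x : Fin m → ℝ => c⁻¹ • x) id)
      (Prod.map (fun y : Fin n → ℝ => d⁻¹ • y) id) := rfl
  have hmapx : Measure.map (fun x : Fin m → ℝ => c⁻¹ • x) volume
      = ENNReal.ofReal r • volume := by
    rw [show (fun x : Fin m → ℝ => c⁻¹ • x) = (c⁻¹ • ·) from rfl,
      Measure.map_addHaar_smul volume (inv_ne_zero hc.ne')]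
    congr 1
    rw [Module.finrank_fin_fun, inv_pow, inv_inv, hcm, abs_of_pos hr]
  have hmapy : Measure.map (fun y : Fin n → ℝ => d⁻¹ • y) volume
      = ENNReal.ofReal r • volume := by
    rw [show (fun y : Fin n → ℝ => d⁻¹ • y) = (d⁻¹ • ·) from rfl,
      Measure.map_addHaar_smul volume (inv_ne_zero hd.ne')]
    congr 1
    rw [Module.finrank_fin_fun, inv_pow, inv_inv, hdn, abs_of_pos hr]
  have hmeasx : Measurable (fun x : Fin m → ℝ => c⁻¹ • x) := measurable_const_smul _
  have hmeasy : Measurable (fun y : Fin n → ℝ => d⁻¹ • y) := measurable_const_smul _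
  haveI := aux_sigmaFinite_smul (ENNReal.ofReal r) ENNReal.ofReal_ne_top
    (volume : Measure (Fin m → ℝ))
  haveI := aux_sigmaFinite_smul (ENNReal.ofReal r) ENNReal.ofReal_ne_top
    (volume : Measure (Fin n → ℝ))
  haveI := aux_sigmaFinite_smul (ENNReal.ofReal r) ENNReal.ofReal_ne_top
    ((volume : Measure (Fin m → ℝ)).prod (Measure.pi μm))
  haveI := aux_sigmaFinite_smul (ENNReal.ofReal r) ENNReal.ofReal_ne_top
    ((volume : Measure (Fin n → ℝ)).prod (Measure.pi μn))
  rw [hΦcoe, ← Measure.map_prod_map _ _ (hmeasx.prodMap measurable_id)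
      (hmeasy.prodMap measurable_id),
    ← Measure.map_prod_map _ _ hmeasx measurable_id,
    ← Measure.map_prod_map _ _ hmeasy measurable_id,
    Measure.map_id, Measure.map_id, hmapx, hmapy,
    aux_smul_prod _ ENNReal.ofReal_ne_top _ _,
    aux_smul_prod _ ENNReal.ofReal_ne_top _ _,
    aux_smul_prod _ ENNReal.ofReal_ne_top _ _,
    aux_prod_smul _ ENNReal.ofReal_ne_top _ _]
  rw [Measure.smul_apply, Measure.smul_apply, smul_eq_mul, smul_eq_mul, ← mul_assoc,
    ← ENNReal.ofReal_mul hr.le, ← sq]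

/-- **Volume scaling of the perturbed regions.**  For `ε ∈ (0,1)` and an admissible
tuple `T`, `vol(E_{ψ⁺_ε}(T⁺)) = (1+ε)² vol(E_ψ(T))` and
`vol(E_{ψ⁻_ε}(T⁻)) = (1+ε)^{−2} vol(E_ψ(T))`. -/
theorem volume_scaling_perturbed_regions
    (m n : ℕ) (hm : 0 < m) (hn : 0 < n)
    (s : ℕ) (p : Fin s → ℕ) [∀ i, Fact (p i).Prime] (hpinj : Function.Injective p)
    [∀ i, MeasurableSpace ℚ_[p i]] [∀ i, BorelSpace ℚ_[p i]]
    (ψ : ApproxFamily m n s p)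
    (ε : ℝ) (hε₀ : 0 < ε) (hε₁ : ε < 1)
    -- Haar measures on `ℚ_S^m` and `ℚ_S^n`, normalized so that the integer points
    -- have measure one at each finite place:
    (μm : ∀ i, Measure (Fin m → ℚ_[p i])) [∀ i, (μm i).IsAddHaarMeasure]
    (hμm : ∀ i, μm i {y | ∀ j, ‖y j‖ ≤ 1} = 1)
    (μn : ∀ i, Measure (Fin n → ℚ_[p i])) [∀ i, (μn i).IsAddHaarMeasure]
    (hμn : ∀ i, μn i {y | ∀ j, ‖y j‖ ≤ 1} = 1)
    (TR : ℝ) (hTR : 1 ≤ TR) (TP : Fin s → ℝ) (hTP : ∀ i, ∃ k : ℕ, TP i = (p i : ℝ) ^ k) :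
    (((volume : Measure (Fin m → ℝ)).prod (Measure.pi μm)).prod
        ((volume : Measure (Fin n → ℝ)).prod (Measure.pi μn)))
        (Eprod m n p (fun t => (1 + ε) * ψ.psiR ((1 + ε)⁻¹ * t)) ψ.psiP ((1 + ε) * TR) TP)
      = ENNReal.ofReal ((1 + ε) ^ 2)
        * (((volume : Measure (Fin m → ℝ)).prod (Measure.pi μm)).prod
            ((volume : Measure (Fin n → ℝ)).prod (Measure.pi μn)))
            (Eprod m n p ψ.psiR ψ.psiP TR TP) ∧
    (((volume : Measure (Fin m → ℝ)).prod (Measure.pi μm)).prod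
        ((volume : Measure (Fin n → ℝ)).prod (Measure.pi μn)))
        (Eprod m n p (fun t => (1 + ε)⁻¹ * ψ.psiR ((1 + ε) * t)) ψ.psiP ((1 + ε)⁻¹ * TR) TP)
      = ENNReal.ofReal (((1 + ε) ^ 2)⁻¹)
        * (((volume : Measure (Fin m → ℝ)).prod (Measure.pi μm)).prod
            ((volume : Measure (Fin n → ℝ)).prod (Measure.pi μn)))
            (Eprod m n p ψ.psiR ψ.psiP TR TP) := by
  have h1 := aux_scale m n hm hn s p μm μn ψ.psiR ψ.psiP TR TP (1 + ε) (by linarith)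
  have h2 := aux_scale m n hm hn s p μm μn ψ.psiR ψ.psiP TR TP (1 + ε)⁻¹
    (by positivity)
  rw [inv_inv] at h2
  refine ⟨h1, ?_⟩
  rw [h2, inv_pow]
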